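/- Feasibility under bounded inputs: let K ⊆ ℝ^n be compact, Z ⊆ K closed, a, b : K → ℝ continuous with b ≥ 0, Z = {x ∈ K : b(x) = 0}, and suppose (i) there is an open neighborhood U of Z in K with a(x) ≥ 0 on U, and (ii) max(−a(x),0) ≤ M + c₁ b(x) and there is σ > 0 with the 'authority' β(x) ≥ σ b(x) for all x ∈ K, where β : K → ℝ is continuous nonnegative with {β = 0} ⊆ Z. Then sup_{x ∈ K \ Z} max(−a(x),0)/β(x) < ∞. -/
import Mathlib


theorem stmt13 {n : ℕ} (K : Set (EuclideanSpace ℝ (Fin n))) (hK : IsCompact K)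
    (a b β : EuclideanSpace ℝ (Fin n) → ℝ)
    (ha : ContinuousOn a K) (hb : ContinuousOn b K) (hβcont : ContinuousOn β K)
    (hbnn : ∀ x ∈ K, 0 ≤ b x) (hβnn : ∀ x ∈ K, 0 ≤ β x)
    (Z : Set (EuclideanSpace ℝ (Fin n))) (hZ : Z = {x ∈ K | b x = 0})
    (U V : Set (EuclideanSpace ℝ (Fin n))) (hV : IsOpen V) (hU : U = V ∩ K)
    (hZU : Z ⊆ U)
    (haU : ∀ x ∈ U, 0 ≤ a x)
    (M c₁ : ℝ) (henv : ∀ x ∈ K, max (-(a x)) 0 ≤ M + c₁ * b x)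
    (σ : ℝ) (hσ : 0 < σ) (hcoerc : ∀ x ∈ K, σ * b x ≤ β x)
    (hβZ : {x ∈ K | β x = 0} ⊆ Z) :
    ∃ C : ℝ, ∀ x ∈ K \ Z, max (-(a x)) 0 / β x ≤ C := by
  -- K' = K \ V is compact, β > 0 on it
  set K' := K \ V with hK'
  have hK'comp : IsCompact K' := hK.diff hV
  have hβpos : ∀ x ∈ K', 0 < β x := by
    intro x hx
    rcases lt_or_eq_of_le (hβnn x hx.1) with h | h
    · exact h
    · exfalso
      have : x ∈ Z := hβZ ⟨hx.1, h.symm⟩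
      have := hZU this
      rw [hU] at this
      exact hx.2 this.1
  -- bound on a
  obtain ⟨A₀, hA₀⟩ := hK.exists_bound_of_continuousOn ha
  set A := max A₀ 0 with hAdef
  have hA : ∀ x ∈ K, ‖a x‖ ≤ A := fun x hx => (hA₀ x hx).trans (le_max_left _ _)
  have hA0 : 0 ≤ A := le_max_right _ _
  by_cases hne : K'.Nonempty
  · obtain ⟨x₀, hx₀, hmin⟩ := hK'comp.exists_isMinOn hne (hβcont.mono (Set.diff_subset))
    set δ := β x₀ with hδ
    have hδpos : 0 < δ := hβpos x₀ hx₀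
    refine ⟨max 0 (A / δ), ?_⟩
    intro x hx
    by_cases hxV : x ∈ V
    · have hxU : x ∈ U := by rw [hU]; exact ⟨hxV, hx.1⟩
      have : max (-(a x)) 0 = 0 := max_eq_right (by linarith [haU x hxU])
      rw [this, zero_div]
      exact le_max_left _ _
    · have hxK' : x ∈ K' := ⟨hx.1, hxV⟩
      have h1 : max (-(a x)) 0 ≤ A := by
        have := hA x hx.1
        have : |a x| ≤ A := this
        rcases abs_le.mp this with ⟨h2, _⟩
        exact max_le (by linarith) hA0
      have h2 : δ ≤ β x := hmin hxK'
      calc max (-(a x)) 0 / β x ≤ A / δ := by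
            apply div_le_div₀ hA0 h1 hδpos h2
        _ ≤ max 0 (A / δ) := le_max_right _ _
  · -- K' empty: every x ∈ K is in V
    refine ⟨0, ?_⟩
    intro x hx
    have hxV : x ∈ V := by
      by_contra hxv
      exact hne ⟨x, hx.1, hxv⟩
    have hxU : x ∈ U := by rw [hU]; exact ⟨hxV, hx.1⟩
    have : max (-(a x)) 0 = 0 := max_eq_right (by linarith [haU x hxU])
    rw [this, zero_div]
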